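/- For a constant matrix A with ‖A‖ small, the fourth-order Cayley–Magnus argument reproduces the exponential: Cay(-(δt A - (1/12)(δt A)³)) = exp(δt A) + O(δt⁵); equivalently, ‖Cay(-(δt A - (δt³/12)A³)) - exp(δt A)‖ ≤ C δt⁵ for δt small. -/

import Mathlib

open Matrix

attribute [local instance] Matrix.normedAddCommGroup Matrix.normedSpace

/-- The Cayley transform of a matrix. -/
noncomputable def Cay {d : ℕ} (A : Matrix (Fin d) (Fin d) ℂ) : Matrix (Fin d) (Fin d) ℂ :=
  (1 + (1/2 : ℂ) • A)⁻¹ * (1 - (1/2 : ℂ) • A)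

section Aux

variable {d : ℕ}

private lemma mat_norm_mul (M N : Matrix (Fin d) (Fin d) ℂ) :
    ‖M * N‖ ≤ (d : ℝ) * ‖M‖ * ‖N‖ := by
  have h0 : (0:ℝ) ≤ (d : ℝ) * ‖M‖ * ‖N‖ := by positivity
  rw [Matrix.norm_le_iff h0]
  intro i j
  calc ‖(M*N) i j‖ = ‖∑ k, M i k * N k j‖ := by rw [Matrix.mul_apply]
    _ ≤ ∑ k, ‖M i k * N k j‖ := norm_sum_le _ _
    _ ≤ ∑ _k : Fin d, ‖M‖ * ‖N‖ := Finset.sum_le_sum (fun k _ => by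
        rw [norm_mul]
        exact mul_le_mul (norm_entry_le_entrywise_sup_norm M)
          (norm_entry_le_entrywise_sup_norm N) (norm_nonneg _) (norm_nonneg _))
    _ = (d : ℝ) * ‖M‖ * ‖N‖ := by
        simp [Finset.sum_const, Finset.card_univ, mul_assoc]

private lemma mat_norm_one : ‖(1 : Matrix (Fin d) (Fin d) ℂ)‖ ≤ 1 := by
  rw [Matrix.norm_le_iff zero_le_one]
  intro i j
  rw [Matrix.one_apply]
  split <;> simp

private lemma mat_norm_pow (X : Matrix (Fin d) (Fin d) ℂ) (n : ℕ) :
    ‖X ^ n‖ ≤ (((d : ℝ) + 1) * ‖X‖) ^ n := by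
  induction n with
  | zero => simpa using mat_norm_one
  | succ n ih =>
    have h1 : ‖X ^ (n+1)‖ ≤ (d : ℝ) * ‖X ^ n‖ * ‖X‖ := by
      rw [pow_succ]; exact mat_norm_mul _ _
    have hd : (0:ℝ) ≤ (d:ℝ) := Nat.cast_nonneg d
    have h2 : (d : ℝ) * ‖X ^ n‖ * ‖X‖ ≤ (((d : ℝ) + 1) * ‖X‖) ^ n * (((d : ℝ) + 1) * ‖X‖) := by
      have hK : (0:ℝ) ≤ (((d : ℝ) + 1) * ‖X‖) ^ n :=
        pow_nonneg (mul_nonneg (by linarith) (norm_nonneg X)) n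
      have e1 : ‖X ^ n‖ * ((d:ℝ) * ‖X‖) ≤ (((d : ℝ) + 1) * ‖X‖) ^ n * ((d:ℝ) * ‖X‖) :=
        mul_le_mul_of_nonneg_right ih (by positivity)
      have e2 : (((d : ℝ) + 1) * ‖X‖) ^ n * ((d:ℝ) * ‖X‖)
          ≤ (((d : ℝ) + 1) * ‖X‖) ^ n * (((d:ℝ) + 1) * ‖X‖) := by
        apply mul_le_mul_of_nonneg_left _ hK
        have := norm_nonneg X
        nlinarith
      calc (d : ℝ) * ‖X ^ n‖ * ‖X‖ = ‖X ^ n‖ * ((d:ℝ) * ‖X‖) := by ring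
        _ ≤ (((d : ℝ) + 1) * ‖X‖) ^ n * ((d:ℝ) * ‖X‖) := e1
        _ ≤ (((d : ℝ) + 1) * ‖X‖) ^ n * (((d:ℝ) + 1) * ‖X‖) := e2
    calc ‖X ^ (n+1)‖ ≤ (d : ℝ) * ‖X ^ n‖ * ‖X‖ := h1
      _ ≤ (((d : ℝ) + 1) * ‖X‖) ^ n * (((d : ℝ) + 1) * ‖X‖) := h2
      _ = (((d : ℝ) + 1) * ‖X‖) ^ (n+1) := (pow_succ _ _).symm

private lemma mat_key (X : Matrix (Fin d) (Fin d) ℂ) :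
    (1 + ((1/2:ℂ)•X - (1/24:ℂ)•X^3)) - (1 - ((1/2:ℂ)•X - (1/24:ℂ)•X^3)) *
      (1 + X + (1/2:ℂ)•X^2 + (1/6:ℂ)•X^3 + (1/24:ℂ)•X^4)
    = -((1/144:ℂ)•X^6) - (1/576:ℂ)•X^7 := by
  simp only [mul_add, add_mul, sub_mul, mul_sub, smul_mul_assoc, mul_smul_comm, one_mul, mul_one,
    smul_smul, ← pow_add, ← pow_succ, ← pow_succ', ← pow_two, ← pow_mul]
  norm_num
  module

end Aux

set_option maxHeartbeats 1600000 in
/-- For a constant matrix `A`, the fourth-order Cayley–Magnus argument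
`Ω = δt A - (1/12)(δt A)³` reproduces the exponential to fifth order:
`‖Cay(-(δt A - (δt³/12) A³)) - exp(δt A)‖ ≤ C δt⁵` for small `δt`. -/
theorem cayley_magnus_fourth_order {d : ℕ} (A : Matrix (Fin d) (Fin d) ℂ) :
    ∃ C > 0, ∃ δ > 0, ∀ δt : ℝ, |δt| ≤ δ →
      ‖Cay (-((δt : ℂ) • A - ((δt : ℂ) ^ 3 / 12) • (A * A * A)))
          - NormedSpace.exp ((δt : ℂ) • A)‖ ≤ C * |δt| ^ 5 := by
  set D : ℝ := (d : ℝ) + 1 with hD_def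
  set a : ℝ := ‖A‖ + 1 with ha_def
  have hD1 : (1:ℝ) ≤ D := by
    rw [hD_def]; have := Nat.cast_nonneg (α := ℝ) d; linarith
  have ha1 : (1:ℝ) ≤ a := by
    rw [ha_def]; have := norm_nonneg A; linarith
  have hD0 : (0:ℝ) < D := by linarith
  have ha0 : (0:ℝ) < a := by linarith
  refine ⟨10 * D^12 * a^5, by positivity, 1/(2*D^3*a), by positivity, ?_⟩
  intro t ht
  set X : Matrix (Fin d) (Fin d) ℂ := (t:ℂ) • A with hX_def
  set u : ℝ := D^2 * a * |t| with hu_def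
  have hu0 : 0 ≤ u := by positivity
  have hDu : D * u ≤ 1/2 := by
    have h1 : D^3 * a * |t| ≤ D^3 * a * (1/(2*D^3*a)) := by
      apply mul_le_mul_of_nonneg_left ht (by positivity)
    have h2 : D^3 * a * (1/(2*D^3*a)) = 1/2 := by field_simp
    rw [h2] at h1
    calc D * u = D^3 * a * |t| := by rw [hu_def]; ring
      _ ≤ 1/2 := h1
  have hu2 : u ≤ 1/2 := by nlinarith
  have hXnorm : ‖X‖ = |t| * ‖A‖ := by
    rw [hX_def, norm_smul, Complex.norm_real, Real.norm_eq_abs]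
  have hA : ‖A‖ ≤ a := by rw [ha_def]; linarith
  have hDX : D * ‖X‖ ≤ u := by
    rw [hXnorm, hu_def]
    calc D * (|t| * ‖A‖) = D * |t| * ‖A‖ := by ring
      _ ≤ D * |t| * a := by
          apply mul_le_mul_of_nonneg_left hA (by positivity)
      _ = 1 * (D * a * |t|) := by ring
      _ ≤ D * (D * a * |t|) := by
          apply mul_le_mul_of_nonneg_right hD1 (by positivity)
      _ = D ^ 2 * a * |t| := by ring
  have hXn : ∀ n, ‖X ^ n‖ ≤ u ^ n := by
    intro n
    refine (mat_norm_pow X n).trans ?_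
    have : ((d:ℝ) + 1) * ‖X‖ = D * ‖X‖ := by rw [hD_def]
    rw [this]
    exact pow_le_pow_left₀ (by positivity) hDX n
  -- B and its bounds
  set B : Matrix (Fin d) (Fin d) ℂ := (1/2:ℂ)•X - (1/24:ℂ)•X^3 with hB_def
  have hDB : D * ‖B‖ ≤ u := by
    have h1 : ‖B‖ ≤ (1/2) * ‖X‖ + (1/24) * ‖X^3‖ := by
      rw [hB_def]
      refine (norm_sub_le _ _).trans (le_of_eq ?_)
      simp only [norm_smul]
      norm_num [norm_div, RCLike.norm_ofNat]
    have h3 : ‖X^3‖ ≤ u^3 := hXn 3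
    have h4 : D * ‖X‖ ≤ u := hDX
    have h5 : D * ‖B‖ ≤ D * ((1/2) * ‖X‖ + (1/24) * ‖X^3‖) :=
      mul_le_mul_of_nonneg_left h1 (by positivity)
    have h6 : D * ‖X^3‖ ≤ D * u^3 := mul_le_mul_of_nonneg_left h3 (by positivity)
    have h7 : D * u^3 ≤ u := by
      calc D * u^3 = (D*u)*(u*u) := by ring
        _ ≤ (1/2)*(u*u) := mul_le_mul_of_nonneg_right hDu (by positivity)
        _ ≤ (1/2)*((1/2)*u) := by
            apply mul_le_mul_of_nonneg_left _ (by norm_num)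
            exact mul_le_mul_of_nonneg_right hu2 hu0
        _ ≤ u := by linarith
    nlinarith [norm_nonneg X, norm_nonneg (X^3)]
  have hB12 : ‖B‖ ≤ 1/2 := by nlinarith [norm_nonneg B]
  have hBn : ∀ n, ‖B ^ n‖ ≤ (1/2:ℝ)^n := by
    intro n
    refine (mat_norm_pow B n).trans ?_
    have h : ((d:ℝ) + 1) * ‖B‖ ≤ 1/2 := by
      have : ((d:ℝ) + 1) * ‖B‖ = D * ‖B‖ := by rw [hD_def]
      rw [this]; exact le_trans hDB hu2
    exact pow_le_pow_left₀ (by positivity) h n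
  have hgeo : Summable (fun n : ℕ => (1/2:ℝ)^n) :=
    summable_geometric_of_lt_one (by norm_num) (by norm_num)
  have hBsumnorm : Summable (fun n : ℕ => ‖B ^ n‖) :=
    Summable.of_nonneg_of_le (fun n => norm_nonneg _) hBn hgeo
  have hBsum : Summable (fun n : ℕ => B ^ n) := Summable.of_norm hBsumnorm
  set S : Matrix (Fin d) (Fin d) ℂ := ∑' n : ℕ, B ^ n with hS_def
  have hSnorm : ‖S‖ ≤ 2 := by
    calc ‖S‖ ≤ ∑' n : ℕ, ‖B ^ n‖ := norm_tsum_le_tsum_norm hBsumnorm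
      _ ≤ ∑' n : ℕ, (1/2:ℝ)^n := Summable.tsum_le_tsum hBn hBsumnorm hgeo
      _ = 2 := by rw [tsum_geometric_of_lt_one (by norm_num) (by norm_num)]; norm_num
  have htailB : S = 1 + ∑' n : ℕ, B ^ (n+1) := by
    rw [hS_def, Summable.tsum_eq_zero_add hBsum]; simp
  have hmulS : (1 - B) * S = 1 := by
    have h1 : B * S = ∑' n : ℕ, B ^ (n+1) := by
      rw [hS_def, ← hBsum.tsum_mul_left B]
      exact tsum_congr (fun n => (pow_succ' B n).symm)
    rw [sub_mul, one_mul, h1, htailB]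
    abel
  have hSmul : S * (1 - B) = 1 := by
    have h1 : S * B = ∑' n : ℕ, B ^ (n+1) := by
      rw [hS_def, ← hBsum.tsum_mul_right B]
      exact tsum_congr (fun n => (pow_succ B n).symm)
    rw [mul_sub, mul_one, h1, htailB]
    abel
  have hinv : (1 - B)⁻¹ = S := Matrix.inv_eq_right_inv hmulS
  -- exponential series
  have hfac1 : ∀ n : ℕ, ‖((n.factorial : ℂ))⁻¹ • X ^ n‖ ≤ (1/2:ℝ)^n := by
    intro n
    rw [norm_smul, norm_inv, Complex.norm_natCast]
    have h1 : (1:ℝ) ≤ (n.factorial : ℝ) := by exact_mod_cast Nat.one_le_iff_ne_zero.mpr n.factorial_ne_zero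
    have h2 : ((n.factorial : ℝ))⁻¹ ≤ 1 := by
      rw [inv_le_one_iff₀]; right; exact h1
    have h3 : ‖X ^ n‖ ≤ (1/2:ℝ)^n := (hXn n).trans (pow_le_pow_left₀ hu0 hu2 n)
    calc ((n.factorial : ℝ))⁻¹ * ‖X ^ n‖ ≤ 1 * (1/2:ℝ)^n := by
          apply mul_le_mul h2 h3 (norm_nonneg _) zero_le_one
      _ = (1/2:ℝ)^n := one_mul _
  have hexpnorm : Summable (fun n : ℕ => ‖((n.factorial : ℂ))⁻¹ • X ^ n‖) :=
    Summable.of_nonneg_of_le (fun n => norm_nonneg _) hfac1 hgeo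
  have hexpsum : Summable (fun n : ℕ => ((n.factorial : ℂ))⁻¹ • X ^ n) :=
    Summable.of_norm hexpnorm
  have hexp : NormedSpace.exp X = ∑' n : ℕ, ((n.factorial : ℂ))⁻¹ • X ^ n := by
    rw [NormedSpace.exp_eq_tsum (𝕂 := ℂ)]
  set P : Matrix (Fin d) (Fin d) ℂ := ∑ n ∈ Finset.range 5, ((n.factorial : ℂ))⁻¹ • X ^ n
    with hP_def
  set T : Matrix (Fin d) (Fin d) ℂ := ∑' n : ℕ, (((n+5).factorial : ℂ))⁻¹ • X ^ (n+5) with hT_def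
  have hsplit : NormedSpace.exp X = P + T := by
    rw [hexp, ← Summable.sum_add_tsum_nat_add 5 hexpsum, hP_def, hT_def]
  have hTfac : ∀ n : ℕ, ‖(((n+5).factorial : ℂ))⁻¹ • X ^ (n+5)‖ ≤ u^5 * (1/2:ℝ)^n := by
    intro n
    rw [norm_smul, norm_inv, Complex.norm_natCast]
    have h1 : (1:ℝ) ≤ ((n+5).factorial : ℝ) := by
      exact_mod_cast Nat.one_le_iff_ne_zero.mpr (n+5).factorial_ne_zero
    have h2 : (((n+5).factorial : ℝ))⁻¹ ≤ 1 := by rw [inv_le_one_iff₀]; right; exact h1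
    have h3 : ‖X ^ (n+5)‖ ≤ u^5 * (1/2:ℝ)^n := by
      refine (hXn (n+5)).trans ?_
      have : u^(n+5) = u^5 * u^n := by ring
      rw [this]
      exact mul_le_mul_of_nonneg_left (pow_le_pow_left₀ hu0 hu2 n) (by positivity)
    calc (((n+5).factorial : ℝ))⁻¹ * ‖X ^ (n+5)‖ ≤ 1 * (u^5 * (1/2:ℝ)^n) := by
          apply mul_le_mul h2 h3 (norm_nonneg _) zero_le_one
      _ = u^5 * (1/2:ℝ)^n := one_mul _
  have hTgeo : Summable (fun n : ℕ => u^5 * (1/2:ℝ)^n) := hgeo.mul_left _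
  have hTsumnorm : Summable (fun n : ℕ => ‖(((n+5).factorial : ℂ))⁻¹ • X ^ (n+5)‖) :=
    Summable.of_nonneg_of_le (fun n => norm_nonneg _) hTfac hTgeo
  have hT2 : ‖T‖ ≤ 2 * u^5 := by
    calc ‖T‖ ≤ ∑' n : ℕ, ‖(((n+5).factorial : ℂ))⁻¹ • X ^ (n+5)‖ :=
          norm_tsum_le_tsum_norm hTsumnorm
      _ ≤ ∑' n : ℕ, u^5 * (1/2:ℝ)^n := Summable.tsum_le_tsum hTfac hTsumnorm hTgeo
      _ = u^5 * ∑' n : ℕ, (1/2:ℝ)^n := tsum_mul_left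
      _ = 2 * u^5 := by
          rw [tsum_geometric_of_lt_one (by norm_num) (by norm_num)]; norm_num [mul_comm]
  -- P explicit
  have hPval : P = 1 + X + (1/2:ℂ)•X^2 + (1/6:ℂ)•X^3 + (1/24:ℂ)•X^4 := by
    rw [hP_def, Finset.sum_range_succ, Finset.sum_range_succ, Finset.sum_range_succ,
      Finset.sum_range_succ, Finset.sum_range_one]
    have f0 : (Nat.factorial 0 : ℂ) = 1 := by norm_num [Nat.factorial]
    have f1 : (Nat.factorial 1 : ℂ) = 1 := by norm_num [Nat.factorial]
    have f2 : (Nat.factorial 2 : ℂ) = 2 := by norm_num [Nat.factorial]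
    have f3 : (Nat.factorial 3 : ℂ) = 6 := by norm_num [Nat.factorial]
    have f4 : (Nat.factorial 4 : ℂ) = 24 := by norm_num [Nat.factorial]
    rw [f0, f1, f2, f3, f4]
    norm_num
  -- the Cayley transform
  have harg : -((t:ℂ) • A - ((t:ℂ)^3/12) • (A * A * A)) = -(X - (1/12:ℂ)•X^3) := by
    have h3 : ((t:ℂ) • A)^3 = ((t:ℂ)^3) • (A * A * A) := by
      rw [smul_pow]
      congr 1
      rw [pow_three, ← mul_assoc]
    have hsc : ((t:ℂ)^3/12) = (1/12:ℂ) * (t:ℂ)^3 := by ring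
    rw [hX_def, h3, smul_smul, hsc]
  have hhalf : (1/2:ℂ) • (X - (1/12:ℂ)•X^3) = B := by
    rw [hB_def, smul_sub]
    simp only [smul_smul]
    norm_num
  have hCay : Cay (-(X - (1/12:ℂ)•X^3)) = S * (1 + B) := by
    rw [Cay, smul_neg, hhalf]
    rw [sub_neg_eq_add, ← sub_eq_add_neg, hinv]
  -- assembly
  have hfactor : Cay (-(X - (1/12:ℂ)•X^3)) - NormedSpace.exp X
      = S * ((1 + B) - (1 - B) * NormedSpace.exp X) := by
    rw [hCay, mul_sub]
    congr 1
    rw [← mul_assoc, hSmul, one_mul]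
  set R : Matrix (Fin d) (Fin d) ℂ := (1 + B) - (1 - B) * NormedSpace.exp X with hR_def
  have hRval : R = (-((1/144:ℂ)•X^6) - (1/576:ℂ)•X^7) - (1 - B) * T := by
    rw [hR_def, hsplit, mul_add, hPval]
    rw [← mat_key X, hB_def]
    abel
  have hX6 : ‖X^6‖ ≤ u^5 := by
    refine (hXn 6).trans ?_
    calc u^6 = u^5 * u := by ring
      _ ≤ u^5 * 1 := by
          apply mul_le_mul_of_nonneg_left (by linarith) (by positivity)
      _ = u^5 := mul_one _
  have hX7 : ‖X^7‖ ≤ u^5 := by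
    refine (hXn 7).trans ?_
    calc u^7 = u^5 * u^2 := by ring
      _ ≤ u^5 * 1 := by
          apply mul_le_mul_of_nonneg_left (by nlinarith) (by positivity)
      _ = u^5 := mul_one _
  have h1B : ‖(1:Matrix (Fin d) (Fin d) ℂ) - B‖ ≤ 2 := by
    refine (norm_sub_le _ _).trans ?_
    have := mat_norm_one (d := d)
    linarith
  have hd : (d:ℝ) ≤ D := by rw [hD_def]; linarith
  have hprod : ‖(1 - B) * T‖ ≤ 4 * D * u^5 := by
    refine (mat_norm_mul _ _).trans ?_
    calc (d:ℝ) * ‖1 - B‖ * ‖T‖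
        ≤ D * ‖1 - B‖ * ‖T‖ := by
          apply mul_le_mul_of_nonneg_right
            (mul_le_mul_of_nonneg_right hd (norm_nonneg _)) (norm_nonneg _)
      _ ≤ D * 2 * ‖T‖ := by
          apply mul_le_mul_of_nonneg_right
            (mul_le_mul_of_nonneg_left h1B hD0.le) (norm_nonneg _)
      _ ≤ D * 2 * (2 * u^5) := mul_le_mul_of_nonneg_left hT2 (by positivity)
      _ = 4 * D * u^5 := by ring
  have hR : ‖R‖ ≤ 5 * D * u^5 := by
    rw [hRval]
    have h1 : ‖(-((1/144:ℂ)•X^6) - (1/576:ℂ)•X^7) - (1 - B) * T‖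
        ≤ ‖(1/144:ℂ)•X^6‖ + ‖(1/576:ℂ)•X^7‖ + ‖(1 - B) * T‖ := by
      refine (norm_sub_le _ _).trans ?_
      have := norm_sub_le (-((1/144:ℂ)•X^6)) ((1/576:ℂ)•X^7)
      rw [norm_neg] at this
      linarith
    refine h1.trans ?_
    have e6 : ‖(1/144:ℂ) • X^6‖ ≤ (1/144) * u^5 := by
      rw [norm_smul, show ‖(1/144:ℂ)‖ = 1/144 by norm_num [norm_div, RCLike.norm_ofNat]]
      exact mul_le_mul_of_nonneg_left hX6 (by norm_num)
    have e7 : ‖(1/576:ℂ) • X^7‖ ≤ (1/576) * u^5 := by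
      rw [norm_smul, show ‖(1/576:ℂ)‖ = 1/576 by norm_num [norm_div, RCLike.norm_ofNat]]
      exact mul_le_mul_of_nonneg_left hX7 (by norm_num)
    nlinarith [mul_nonneg (sub_nonneg.mpr hD1) (pow_nonneg hu0 5), pow_nonneg hu0 5]
  calc ‖Cay (-((t:ℂ) • A - ((t:ℂ)^3/12) • (A * A * A))) - NormedSpace.exp ((t:ℂ) • A)‖
      = ‖S * R‖ := by rw [harg, ← hX_def, hfactor, hR_def]
    _ ≤ (d:ℝ) * ‖S‖ * ‖R‖ := mat_norm_mul _ _
    _ ≤ 10 * D^2 * u^5 := by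
        calc (d:ℝ) * ‖S‖ * ‖R‖
            ≤ D * ‖S‖ * ‖R‖ := by
              apply mul_le_mul_of_nonneg_right
                (mul_le_mul_of_nonneg_right hd (norm_nonneg _)) (norm_nonneg _)
          _ ≤ D * 2 * ‖R‖ := by
              apply mul_le_mul_of_nonneg_right
                (mul_le_mul_of_nonneg_left hSnorm hD0.le) (norm_nonneg _)
          _ ≤ D * 2 * (5 * D * u^5) := mul_le_mul_of_nonneg_left hR (by positivity)
          _ = 10 * D^2 * u^5 := by ring
    _ = 10 * D^12 * a^5 * |t|^5 := by rw [hu_def]; ring
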